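/- arXiv:2410.06823 — 4 statements merged into one kernel-verified Lean document; each statement's English description precedes it below -/
import Mathlib

section
/- Let ε > 0 and β > ε/(4(1+ε)), and let Q be the symmetric matrix with Q₁₁ = β, Q₁₂ = (ε - 2β(1+ε))/2, Q₂₂ = β(1+ε)². Then the argument of the square root in the eigenvalue formula, β²(1+(1+ε)²)² - ε(4(1+ε)β - ε), is at least (ε((1+ε)²-1)/((1+ε)²+1))², and in particular is positive. -/
theorem stmt_5 (ε β : ℝ) (hε : 0 < ε) (hβ : ε / (4 * (1 + ε)) < β) :
    (ε * ((1 + ε) ^ 2 - 1) / ((1 + ε) ^ 2 + 1)) ^ 2 ≤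
      β ^ 2 * (1 + (1 + ε) ^ 2) ^ 2 - ε * (4 * (1 + ε) * β - ε) ∧
    0 < β ^ 2 * (1 + (1 + ε) ^ 2) ^ 2 - ε * (4 * (1 + ε) * β - ε) := by
  have hd : (0:ℝ) < (1 + ε) ^ 2 + 1 := by positivity
  have key : (ε * ((1 + ε) ^ 2 - 1) / ((1 + ε) ^ 2 + 1)) ^ 2 ≤
      β ^ 2 * (1 + (1 + ε) ^ 2) ^ 2 - ε * (4 * (1 + ε) * β - ε) := by
    rw [div_pow, div_le_iff₀ (by positivity)]
    nlinarith [sq_nonneg (β * ((1 + ε) ^ 2 + 1) ^ 2 - 2 * ε * (1 + ε)), sq_nonneg (1+ε), hε.le]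
  have hpos : 0 < (ε * ((1 + ε) ^ 2 - 1) / ((1 + ε) ^ 2 + 1)) ^ 2 := by
    have : (0:ℝ) < (1 + ε) ^ 2 - 1 := by nlinarith
    positivity
  exact ⟨key, lt_of_lt_of_le hpos key⟩
end

section
/- Let λ₁, λ₂ > 0, ε > 0, β > ε/(4(1+ε)). Then for the closed-loop system η₁' = -βφ₁(η₁) - (1 + β(1+ε))φ₂(η₂), η₂' = -β(1+ε)φ₂(η₂) + (1-β)φ₁(η₁), the origin is the unique equilibrium, and V₁(η) = Φ₁(η₁) + (1+ε)Φ₂(η₂) is a strict Lyapunov function: V₁ is positive definite, radially unbounded, and its derivative along solutions is negative for all η ≠ 0. -/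
open Filter

private lemma key_exp (x : ℝ) : |x| - 2 ≤ Real.exp x - 1 - x := by
  rcases le_or_gt 0 x with hx | hx
  · rw [abs_of_nonneg hx]
    have h : Real.exp x = Real.exp (x / 2) ^ 2 := by
      rw [sq, ← Real.exp_add]; ring_nf
    nlinarith [Real.add_one_le_exp (x / 2), sq_nonneg (x / 2 - 1), Real.exp_pos (x / 2)]
  · rw [abs_of_neg hx]
    nlinarith [Real.exp_pos x]

private lemma exp_pos_def (x : ℝ) (hx : x ≠ 0) : 0 < Real.exp x - 1 - x := by
  have := Real.add_one_lt_exp hx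
  linarith

theorem stmt_9 (l1 l2 ε β : ℝ) (hl1 : 0 < l1) (hl2 : 0 < l2)
    (hε : 0 < ε) (hβ : ε / (4 * (1 + ε)) < β)
    (φ₁ φ₂ Φ₁ Φ₂ : ℝ → ℝ)
    (hφ₁ : ∀ η, φ₁ η = (1 / l1) * (1 - Real.exp (-η)))
    (hφ₂ : ∀ η, φ₂ η = l2 * (Real.exp η - 1))
    (hΦ₁ : ∀ r, Φ₁ r = (1 / l1) * (Real.exp (-r) - 1 + r))
    (hΦ₂ : ∀ r, Φ₂ r = l2 * (Real.exp r - 1 - r))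
    (f : ℝ × ℝ → ℝ × ℝ)
    (hf : ∀ η : ℝ × ℝ, f η =
      (-β * φ₁ η.1 - (1 + β * (1 + ε)) * φ₂ η.2,
       -β * (1 + ε) * φ₂ η.2 + (1 - β) * φ₁ η.1))
    (V₁ : ℝ × ℝ → ℝ)
    (hV₁ : ∀ η : ℝ × ℝ, V₁ η = Φ₁ η.1 + (1 + ε) * Φ₂ η.2) :
    (∀ η : ℝ × ℝ, f η = 0 ↔ η = 0) ∧
    V₁ 0 = 0 ∧ (∀ η : ℝ × ℝ, η ≠ 0 → 0 < V₁ η) ∧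
    Tendsto V₁ (cocompact (ℝ × ℝ)) atTop ∧
    (∀ η : ℝ × ℝ, η ≠ 0 →
      φ₁ η.1 * (f η).1 + (1 + ε) * φ₂ η.2 * (f η).2 < 0) := by
  have hε1 : (0:ℝ) < 1 + ε := by linarith
  have hβ0 : 0 < β := lt_of_le_of_lt (by positivity) hβ
  have hβε : ε < 4 * β * (1 + ε) := by
    have := (div_lt_iff₀ (by positivity)).mp hβ
    linarith
  -- injectivity of φ's
  have hφ₁zero : ∀ x : ℝ, φ₁ x = 0 ↔ x = 0 := by
    intro x
    rw [hφ₁]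
    constructor
    · intro h
      have h1 : 1 - Real.exp (-x) = 0 := by
        have := mul_eq_zero.mp h
        rcases this with h | h
        · exfalso; have : (1:ℝ)/l1 ≠ 0 := by positivity
          exact this h
        · exact h
      have : Real.exp (-x) = 1 := by linarith
      have h2 : Real.exp (-x) = Real.exp 0 := by simpa using this
      have := Real.exp_eq_exp.mp h2
      linarith
    · intro h; subst h; simp
  have hφ₂zero : ∀ x : ℝ, φ₂ x = 0 ↔ x = 0 := by
    intro x
    rw [hφ₂]
    constructor
    · intro h
      have h1 : Real.exp x - 1 = 0 := by
        rcases mul_eq_zero.mp h with h | h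
        · exact absurd h (ne_of_gt hl2)
        · exact h
      have : Real.exp x = 1 := by linarith
      have h2 : Real.exp x = Real.exp 0 := by simpa using this
      exact Real.exp_eq_exp.mp h2
    · intro h; subst h; simp
  refine ⟨?_, ?_, ?_, ?_, ?_⟩
  · -- unique equilibrium
    intro η
    rw [hf, Prod.ext_iff]
    constructor
    · rintro ⟨h1, h2⟩
      simp only [Prod.fst_zero, Prod.snd_zero] at h1 h2
      set a := φ₁ η.1 with ha
      set b := φ₂ η.2 with hb
      have hb0 : b * (1 + β * ε) = 0 := by linear_combination (β - 1) * h1 - β * h2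
      have hb0' : b = 0 := by
        rcases mul_eq_zero.mp hb0 with h | h
        · exact h
        · exfalso; nlinarith
      have ha0 : a = 0 := by
        have : -β * a = 0 := by rw [hb0'] at h1; linarith
        rcases mul_eq_zero.mp this with h | h
        · exfalso; linarith
        · exact h
      have := (hφ₁zero η.1).mp ha0
      have := (hφ₂zero η.2).mp hb0'
      exact Prod.ext_iff.mpr ⟨by simpa using ‹η.1 = 0›, by simpa using ‹η.2 = 0›⟩
    · intro h
      subst h
      simp only [Prod.fst_zero, Prod.snd_zero]
      rw [(hφ₁zero 0).mpr rfl, (hφ₂zero 0).mpr rfl]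
      constructor <;> ring_nf <;> simp
  · rw [hV₁]; simp [hΦ₁, hΦ₂]
  · -- positive definite
    intro η hη
    rw [hV₁, hΦ₁, hΦ₂]
    have h1 : 0 ≤ Real.exp (-η.1) - 1 + η.1 := by
      have := Real.add_one_le_exp (-η.1); linarith
    have h2 : 0 ≤ Real.exp η.2 - 1 - η.2 := by
      have := Real.add_one_le_exp η.2; linarith
    have : η.1 ≠ 0 ∨ η.2 ≠ 0 := by
      by_contra h
      push_neg at h
      exact hη (Prod.ext_iff.mpr ⟨h.1, h.2⟩)
    rcases this with h | h
    · have h1' : 0 < Real.exp (-η.1) - 1 + η.1 := by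
        have := exp_pos_def (-η.1) (neg_ne_zero.mpr h); linarith
      have hx : 0 < (1/l1) * (Real.exp (-η.1) - 1 + η.1) := by positivity
      have hy : 0 ≤ (1+ε) * (l2 * (Real.exp η.2 - 1 - η.2)) :=
        mul_nonneg hε1.le (mul_nonneg hl2.le h2)
      linarith
    · have h2' : 0 < Real.exp η.2 - 1 - η.2 := exp_pos_def η.2 h
      have hx : 0 < (1+ε) * (l2 * (Real.exp η.2 - 1 - η.2)) :=
        mul_pos hε1 (mul_pos hl2 h2')
      have hy : 0 ≤ (1/l1) * (Real.exp (-η.1) - 1 + η.1) :=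
        mul_nonneg (by positivity) h1
      linarith
  · -- radially unbounded
    set c : ℝ := min (1/l1) ((1+ε)*l2) with hc
    have hc0 : 0 < c := lt_min (by positivity) (by positivity)
    set C : ℝ := 2/l1 + 2*(1+ε)*l2 with hC
    have hlow : ∀ η : ℝ × ℝ, c * ‖η‖ - C ≤ V₁ η := by
      intro η
      rw [hV₁, hΦ₁, hΦ₂]
      have k1 : |η.1| - 2 ≤ Real.exp (-η.1) - 1 + η.1 := by
        have := key_exp (-η.1)
        rw [abs_neg] at this
        linarith
      have k2 : |η.2| - 2 ≤ Real.exp η.2 - 1 - η.2 := key_exp η.2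
      have hnorm : ‖η‖ = max |η.1| |η.2| := rfl
      have hb1 : (1/l1) * (|η.1| - 2) ≤ (1/l1) * (Real.exp (-η.1) - 1 + η.1) := by
        apply mul_le_mul_of_nonneg_left k1 (by positivity)
      have hb2 : (1+ε) * (l2 * (|η.2| - 2)) ≤ (1+ε) * (l2 * (Real.exp η.2 - 1 - η.2)) := by
        apply mul_le_mul_of_nonneg_left (mul_le_mul_of_nonneg_left k2 (le_of_lt hl2)) (le_of_lt hε1)
      have hcn : c * ‖η‖ ≤ (1/l1) * |η.1| + (1+ε) * (l2 * |η.2|) := by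
        rw [hnorm]
        rcases max_choice |η.1| |η.2| with h | h <;> rw [h]
        · have : c * |η.1| ≤ (1/l1) * |η.1| :=
            mul_le_mul_of_nonneg_right (min_le_left _ _) (abs_nonneg _)
          have h2 : 0 ≤ (1+ε) * (l2 * |η.2|) := by positivity
          linarith
        · have : c * |η.2| ≤ ((1+ε)*l2) * |η.2| :=
            mul_le_mul_of_nonneg_right (min_le_right _ _) (abs_nonneg _)
          have h1 : 0 ≤ (1/l1) * |η.1| := by positivity
          nlinarith
      have e1 : (1/l1) * (|η.1| - 2) = (1/l1) * |η.1| - 2/l1 := by ring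
      have e2 : (1+ε) * (l2 * (|η.2| - 2)) = (1+ε) * (l2 * |η.2|) - 2*(1+ε)*l2 := by ring
      linarith
    have h1 : Tendsto (fun η : ℝ × ℝ => c * ‖η‖ - C) (cocompact (ℝ × ℝ)) atTop := by
      have := tendsto_norm_cocompact_atTop (E := ℝ × ℝ)
      have h2 := this.const_mul_atTop hc0
      exact tendsto_atTop_add_const_right _ (-C) h2
    exact tendsto_atTop_mono hlow h1
  · -- strict Lyapunov
    intro η hη
    rw [hf]
    simp only
    set a := φ₁ η.1 with ha
    set b := φ₂ η.2 with hb
    have hab : a ≠ 0 ∨ b ≠ 0 := by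
      by_contra h
      push_neg at h
      exact hη (Prod.ext_iff.mpr ⟨(hφ₁zero η.1).mp h.1, (hφ₂zero η.2).mp h.2⟩)
    have key : a * (-β * a - (1 + β * (1 + ε)) * b) +
        (1 + ε) * b * (-β * (1 + ε) * b + (1 - β) * a) =
        -β * a^2 + (ε - 2*β*(1+ε)) * (a*b) - β*(1+ε)^2 * b^2 := by ring
    rw [key]
    rcases eq_or_ne b 0 with hb0 | hb0
    · have ha0 : a ≠ 0 := by tauto
      rw [hb0]
      have : 0 < a^2 := by positivity
      nlinarith
    · have hb2 : 0 < b^2 := by positivity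
      nlinarith [sq_nonneg (2*β*a - (ε - 2*β*(1+ε))*b), mul_pos hε (mul_pos hb2 (sub_pos.mpr (show ε < 4*β*(1+ε) from hβε)))]
end

section
/- Let u*, ε, β, δ > 0 with ελ₂ + β < u*, and let φ(η) = φ₁(η₁) + (1+ε)φ₂(η₂) with φ₁, φ₂ as in the predator-prey model (λ₁, λ₂ > 0). Then the feedback u(η) = u* + εφ₂(η₂) + β·φ(η)/√(δ² + (min(0, φ(η)))²) satisfies u(η) > 0 for every η ∈ ℝ². -/
theorem stmt_12 (l1 l2 ustar ε β δ : ℝ) (hl1 : 0 < l1) (hl2 : 0 < l2)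
    (hustar : 0 < ustar) (hε : 0 < ε) (hβ : 0 < β) (hδ : 0 < δ)
    (hgain : ε * l2 + β < ustar)
    (φ₁ φ₂ : ℝ → ℝ)
    (hφ₁ : ∀ η, φ₁ η = (1 / l1) * (1 - Real.exp (-η)))
    (hφ₂ : ∀ η, φ₂ η = l2 * (Real.exp η - 1))
    (φ : ℝ × ℝ → ℝ)
    (hφ : ∀ η : ℝ × ℝ, φ η = φ₁ η.1 + (1 + ε) * φ₂ η.2)
    (u : ℝ × ℝ → ℝ)
    (hu : ∀ η : ℝ × ℝ, u η = ustar + ε * φ₂ η.2 +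
      β * φ η / Real.sqrt (δ ^ 2 + (min 0 (φ η)) ^ 2)) :
    ∀ η : ℝ × ℝ, 0 < u η := by
  intro η
  rw [hu]
  set p := φ η with hp
  set s := Real.sqrt (δ ^ 2 + (min 0 p) ^ 2) with hs
  have hs2 : s ^ 2 = δ ^ 2 + (min 0 p) ^ 2 := by
    rw [hs]
    exact Real.sq_sqrt (by positivity)
  have hspos : 0 < s := by
    rw [hs]; exact Real.sqrt_pos.mpr (by positivity)
  -- εφ₂ ≥ -εl2
  have hφ2lb : -l2 ≤ φ₂ η.2 := by
    rw [hφ₂]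
    nlinarith [Real.exp_pos η.2]
  -- β p / s > -β
  have hsat : -β < β * p / s := by
    rcases le_or_gt 0 p with hpn | hpn
    · have : 0 ≤ β * p / s := by positivity
      linarith
    · have hm : min 0 p = p := min_eq_right hpn.le
      have hps : -s < p := by
        nlinarith [sq_nonneg (p + s)]
      rw [lt_div_iff₀ hspos]
      nlinarith
  have : -(ε * l2) ≤ ε * φ₂ η.2 := by nlinarith
  have h1 : ustar - ε * l2 - β > 0 := by linarith
  calc (0:ℝ) < ustar - ε * l2 - β := h1
    _ ≤ ustar + ε * φ₂ η.2 + β * p / s := by linarith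
end

section
/- Let λ₁, λ₂, ε, δ > 0, β ≥ 0, φ₁(η) = (1/λ₁)(1-e^{-η}), φ₂(η) = λ₂(e^{η}-1), φ(η) = φ₁(η₁)+(1+ε)φ₂(η₂). Along solutions of η₁' = u* - u - φ₂(η₂), η₂' = u* - u + φ₁(η₁) with the saturated feedback u = u* + εφ₂(η₂) + βφ(η)/√(δ²+(min(0,φ(η)))²), the derivative of V₁(η) = Φ₁(η₁) + (1+ε)Φ₂(η₂) equals -ε(1+ε)φ₂(η₂)² - βφ(η)²/√(δ²+(min(0,φ(η)))²), which is nonpositive, and strictly negative for all η ≠ 0 when β > 0. -/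
theorem stmt_13 (l1 l2 ustar ε β δ : ℝ) (hl1 : 0 < l1) (hl2 : 0 < l2)
    (hε : 0 < ε) (hβ : 0 ≤ β) (hδ : 0 < δ)
    (φ₁ φ₂ Φ₁ Φ₂ : ℝ → ℝ)
    (hφ₁ : ∀ η, φ₁ η = (1 / l1) * (1 - Real.exp (-η)))
    (hφ₂ : ∀ η, φ₂ η = l2 * (Real.exp η - 1))
    (hΦ₁ : ∀ r, Φ₁ r = (1 / l1) * (Real.exp (-r) - 1 + r))
    (hΦ₂ : ∀ r, Φ₂ r = l2 * (Real.exp r - 1 - r))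
    (φ : ℝ × ℝ → ℝ)
    (hφ : ∀ η : ℝ × ℝ, φ η = φ₁ η.1 + (1 + ε) * φ₂ η.2)
    (W : ℝ × ℝ → ℝ)
    (hW : ∀ η : ℝ × ℝ, W η = -(ε * (1 + ε) * (φ₂ η.2) ^ 2)
      - β * (φ η) ^ 2 / Real.sqrt (δ ^ 2 + (min 0 (φ η)) ^ 2))
    (u : ℝ × ℝ → ℝ)
    (hu : ∀ η : ℝ × ℝ, u η = ustar + ε * φ₂ η.2 +
      β * φ η / Real.sqrt (δ ^ 2 + (min 0 (φ η)) ^ 2))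
    (η₁ η₂ : ℝ → ℝ)
    (h1 : ∀ t, HasDerivAt η₁ ((ustar - u (η₁ t, η₂ t)) - φ₂ (η₂ t)) t)
    (h2 : ∀ t, HasDerivAt η₂ ((ustar - u (η₁ t, η₂ t)) + φ₁ (η₁ t)) t) :
    (∀ t, HasDerivAt (fun s => Φ₁ (η₁ s) + (1 + ε) * Φ₂ (η₂ s))
        (W (η₁ t, η₂ t)) t) ∧
    (∀ η : ℝ × ℝ, W η ≤ 0) ∧
    (0 < β → ∀ η : ℝ × ℝ, η ≠ 0 → W η < 0) := by
  have hs : ∀ η : ℝ × ℝ, 0 < Real.sqrt (δ ^ 2 + (min 0 (φ η)) ^ 2) := by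
    intro η
    apply Real.sqrt_pos.2
    positivity
  have hΦ₁e : Φ₁ = fun r => (1 / l1) * (Real.exp (-r) - 1 + r) := funext hΦ₁
  have hΦ₂e : Φ₂ = fun r => l2 * (Real.exp r - 1 - r) := funext hΦ₂
  refine ⟨?_, ?_, ?_⟩
  · intro t
    have d1 : HasDerivAt Φ₁ (φ₁ (η₁ t)) (η₁ t) := by
      rw [hΦ₁e, hφ₁]
      have h := ((((Real.hasDerivAt_exp (-(η₁ t))).comp (η₁ t)
        (hasDerivAt_neg (η₁ t))).sub_const 1).add (hasDerivAt_id (η₁ t))).const_mul (1 / l1)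
      simp only [Function.comp, id_eq] at h
      refine h.congr_deriv ?_
      ring
    have d2 : HasDerivAt Φ₂ (φ₂ (η₂ t)) (η₂ t) := by
      rw [hΦ₂e, hφ₂]
      exact (((Real.hasDerivAt_exp (η₂ t)).sub_const 1).sub (hasDerivAt_id (η₂ t))).const_mul l2
    have D := ((d1.comp t (h1 t)).add ((d2.comp t (h2 t)).const_mul (1 + ε)))
    refine D.congr_deriv ?_
    rw [hW, hu, hφ]
    have hsne := (hs (η₁ t, η₂ t)).ne'
    rw [hφ] at hsne
    field_simp
    ring
  · intro η
    rw [hW]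
    have ha : 0 ≤ ε * (1 + ε) * (φ₂ η.2) ^ 2 := by positivity
    have hb2 : 0 ≤ β * (φ η) ^ 2 / Real.sqrt (δ ^ 2 + (min 0 (φ η)) ^ 2) := by
      have := hs η; positivity
    linarith
  · intro hbpos η hη
    rw [hW]
    have hsη := hs η
    by_cases h2 : η.2 = 0
    · have h1z : η.1 ≠ 0 := by
        intro h1
        exact hη (Prod.ext h1 h2)
      have hφ2z : φ₂ η.2 = 0 := by rw [hφ₂, h2]; simp
      have hφne : φ η ≠ 0 := by
        rw [hφ, hφ2z, hφ₁]
        simp only [mul_zero, add_zero]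
        intro h
        have : Real.exp (-η.1) = 1 := by
          have hl1' : (1 : ℝ) / l1 ≠ 0 := by positivity
          have := mul_eq_zero.1 h
          rcases this with h' | h'
          · exact absurd h' hl1'
          · linarith
        rw [Real.exp_eq_one_iff] at this
        exact h1z (by linarith)
      have : 0 < β * (φ η) ^ 2 / Real.sqrt (δ ^ 2 + (min 0 (φ η)) ^ 2) := by
        apply div_pos _ hsη
        have : 0 < (φ η) ^ 2 := by positivity
        positivity
      have ha : 0 ≤ ε * (1 + ε) * (φ₂ η.2) ^ 2 := by positivity
      linarith
    · have hφ2ne : φ₂ η.2 ≠ 0 := by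
        rw [hφ₂]
        intro h
        have : Real.exp η.2 = 1 := by
          rcases mul_eq_zero.1 h with h' | h'
          · exact absurd h' hl2.ne'
          · linarith
        rw [Real.exp_eq_one_iff] at this
        exact h2 this
      have ha : 0 < ε * (1 + ε) * (φ₂ η.2) ^ 2 := by
        have : 0 < (φ₂ η.2) ^ 2 := by positivity
        positivity
      have hb2 : 0 ≤ β * (φ η) ^ 2 / Real.sqrt (δ ^ 2 + (min 0 (φ η)) ^ 2) := by
        positivity
      linarith
end
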